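/- Let ψ₊, ψ₋ ∈ (0,π) and set S := ψ₊ + ψ₋. Then there exists a unique c ∈ ℝ such that c·sin θ + S > 0 for all θ ∈ [−ψ₊, ψ₋] and ∫_{−ψ₊}^{ψ₋} sin θ / (c·sin θ + S) dθ = 0. Moreover this c satisfies: c > 0 if and only if ψ₋ > ψ₊, c = 0 if and only if ψ₋ = ψ₊, c < 0 if and only if ψ₋ < ψ₊; and ∫_{−ψ₊}^{ψ₋} dθ / (c·sin θ + S) = 1 (so the curve with curvature κ_W(θ) = −c·sin θ − S, θ ∈ [−ψ₊,ψ₋], has length 1). -/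

import Mathlib

open Real Set intervalIntegral

namespace TW

open MeasureTheory

lemma sin_lip (x y : ℝ) : |Real.sin x - Real.sin y| ≤ |x - y| := by
  rw [Real.sin_sub_sin, abs_mul, abs_mul]
  have h2 : |Real.cos ((x+y)/2)| ≤ 1 := Real.abs_cos_le_one _
  have h3 : |Real.sin ((x-y)/2)| ≤ |x-y|/2 := by
    calc |Real.sin ((x-y)/2)| ≤ |(x-y)/2| := Real.abs_sin_le_abs
      _ = |x-y|/2 := by rw [abs_div]; norm_num
  have h4 : (0:ℝ) ≤ |Real.sin ((x-y)/2)| := abs_nonneg _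
  have h5 : (0:ℝ) ≤ |x-y| := abs_nonneg _
  rw [show |(2:ℝ)| = 2 by norm_num]
  nlinarith

lemma contD (c S : ℝ) : Continuous (fun θ => c * Real.sin θ + S) :=
  (continuous_const.mul Real.continuous_sin).add continuous_const

lemma integ' {a b : ℝ} (hab : a ≤ b) {f g : ℝ → ℝ} (hf : Continuous f) (hg : Continuous g)
    (h : ∀ θ ∈ Set.Icc a b, g θ ≠ 0) :
    IntervalIntegrable (fun θ => f θ / g θ) volume a b := by
  apply ContinuousOn.intervalIntegrable
  rw [Set.uIcc_of_le hab]
  exact hf.continuousOn.div hg.continuousOn h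

lemma integ {a b S c : ℝ} (hab : a ≤ b)
    (h : ∀ θ ∈ Set.Icc a b, 0 < c * Real.sin θ + S) (f : ℝ → ℝ) (hf : Continuous f) :
    IntervalIntegrable (fun θ => f θ / (c * Real.sin θ + S)) volume a b :=
  integ' hab hf (contD c S) (fun θ hθ => (h θ hθ).ne')

lemma identity {a b S c : ℝ} (hab : a ≤ b)
    (h : ∀ θ ∈ Set.Icc a b, 0 < c * Real.sin θ + S) :
    b - a = c * (∫ θ in a..b, Real.sin θ / (c * Real.sin θ + S))
      + S * (∫ θ in a..b, 1 / (c * Real.sin θ + S)) := by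
  rw [← intervalIntegral.integral_const_mul, ← intervalIntegral.integral_const_mul,
    ← intervalIntegral.integral_add ((integ hab h _ Real.continuous_sin).const_mul c)
      ((integ hab h _ continuous_const).const_mul S)]
  have : (∫ θ in a..b,
      (c * (Real.sin θ / (c * Real.sin θ + S)) + S * (1 / (c * Real.sin θ + S))))
      = ∫ θ in a..b, (1:ℝ) := by
    apply intervalIntegral.integral_congr
    intro θ hθ
    rw [Set.uIcc_of_le hab] at hθ
    have hD := (h θ hθ).ne'
    field_simp
  rw [this]
  simp

lemma diff_formula {a b S c₁ c₂ : ℝ} (hab : a ≤ b)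
    (h₁ : ∀ θ ∈ Set.Icc a b, 0 < c₁ * Real.sin θ + S)
    (h₂ : ∀ θ ∈ Set.Icc a b, 0 < c₂ * Real.sin θ + S) :
    (∫ θ in a..b, Real.sin θ / (c₁ * Real.sin θ + S))
      - (∫ θ in a..b, Real.sin θ / (c₂ * Real.sin θ + S))
    = (c₂ - c₁) * ∫ θ in a..b,
        (Real.sin θ)^2 / ((c₁ * Real.sin θ + S) * (c₂ * Real.sin θ + S)) := by
  rw [← intervalIntegral.integral_sub (integ hab h₁ _ Real.continuous_sin)
    (integ hab h₂ _ Real.continuous_sin), ← intervalIntegral.integral_const_mul]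
  apply intervalIntegral.integral_congr
  intro θ hθ
  rw [Set.uIcc_of_le hab] at hθ
  have hD₁ := (h₁ θ hθ).ne'
  have hD₂ := (h₂ θ hθ).ne'
  dsimp only
  rw [div_sub_div _ _ hD₁ hD₂, ← mul_div_assoc]
  congr 1
  ring

lemma pos_integral {a b S c₁ c₂ : ℝ} (ha : a ≤ 0) (hb : 0 < b) (hbπ : b < π)
    (h₁ : ∀ θ ∈ Set.Icc a b, 0 < c₁ * Real.sin θ + S)
    (h₂ : ∀ θ ∈ Set.Icc a b, 0 < c₂ * Real.sin θ + S) :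
    0 < ∫ θ in a..b,
        (Real.sin θ)^2 / ((c₁ * Real.sin θ + S) * (c₂ * Real.sin θ + S)) := by
  have hab : a ≤ b := le_trans ha hb.le
  have hg : Continuous (fun θ => (c₁ * Real.sin θ + S) * (c₂ * Real.sin θ + S)) :=
    (contD c₁ S).mul (contD c₂ S)
  have hgpos : ∀ θ ∈ Set.Icc a b,
      0 < (c₁ * Real.sin θ + S) * (c₂ * Real.sin θ + S) :=
    fun θ hθ => mul_pos (h₁ θ hθ) (h₂ θ hθ)
  have hint1 : IntervalIntegrable
      (fun θ => (Real.sin θ)^2 / ((c₁ * Real.sin θ + S) * (c₂ * Real.sin θ + S)))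
      volume a 0 := by
    apply integ' ha (Real.continuous_sin.pow 2) hg
    exact fun θ hθ => (hgpos θ ⟨hθ.1, le_trans hθ.2 hb.le⟩).ne'
  have hint2 : IntervalIntegrable
      (fun θ => (Real.sin θ)^2 / ((c₁ * Real.sin θ + S) * (c₂ * Real.sin θ + S)))
      volume 0 b := by
    apply integ' hb.le (Real.continuous_sin.pow 2) hg
    exact fun θ hθ => (hgpos θ ⟨le_trans ha hθ.1, hθ.2⟩).ne'
  rw [← intervalIntegral.integral_add_adjacent_intervals hint1 hint2]
  have hpos2 : 0 < ∫ θ in (0:ℝ)..b,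
      (Real.sin θ)^2 / ((c₁ * Real.sin θ + S) * (c₂ * Real.sin θ + S)) := by
    apply intervalIntegral.intervalIntegral_pos_of_pos_on hint2 _ hb
    intro x hx
    have hsx : 0 < Real.sin x := Real.sin_pos_of_pos_of_lt_pi hx.1 (hx.2.trans hbπ)
    exact div_pos (by positivity) (hgpos x ⟨le_trans ha hx.1.le, hx.2.le⟩)
  have hpos1 : 0 ≤ ∫ θ in a..(0:ℝ),
      (Real.sin θ)^2 / ((c₁ * Real.sin θ + S) * (c₂ * Real.sin θ + S)) := by
    apply intervalIntegral.integral_nonneg ha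
    intro x hx
    exact div_nonneg (sq_nonneg _) (hgpos x ⟨hx.1, le_trans hx.2 hb.le⟩).le
  linarith

/-- Uniqueness of the admissible root. -/
lemma uniq {a b S c c' : ℝ} (ha : a ≤ 0) (hb : 0 < b) (hbπ : b < π)
    (h : ∀ θ ∈ Set.Icc a b, 0 < c * Real.sin θ + S)
    (h' : ∀ θ ∈ Set.Icc a b, 0 < c' * Real.sin θ + S)
    (hF : (∫ θ in a..b, Real.sin θ / (c * Real.sin θ + S)) = 0)
    (hF' : (∫ θ in a..b, Real.sin θ / (c' * Real.sin θ + S)) = 0) :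
    c' = c := by
  have hd := diff_formula (le_trans ha hb.le) h' h
  rw [hF, hF'] at hd
  have hI := pos_integral ha hb hbπ h' h
  have hd2 : (c - c') * (∫ θ in a..b,
      (Real.sin θ)^2 / ((c' * Real.sin θ + S) * (c * Real.sin θ + S))) = 0 := by
    linarith [hd]
  rcases mul_eq_zero.mp hd2 with h0 | h0
  · linarith [sub_eq_zero.mp h0]
  · exact absurd h0 hI.ne'

lemma log_int {α δ r p : ℝ} (hα : 0 < α) (hδ : 0 < δ) (hr : 0 ≤ r) :
    ∫ θ in p..(p+r), 1/(α*(θ-p)+δ)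
      = (Real.log (α*r+δ) - Real.log δ)/α := by
  have hab : p ≤ p + r := by linarith
  have key : ∀ θ ∈ Set.uIcc p (p+r),
      HasDerivAt (fun x => Real.log (α*(x-p)+δ) / α) (1/(α*(θ-p)+δ)) θ := by
    intro θ hθ
    rw [Set.uIcc_of_le hab] at hθ
    have hpos : 0 < α*(θ-p)+δ := by nlinarith [hθ.1]
    have hinner : HasDerivAt (fun x => α*(x-p)+δ) α θ := by
      simpa using (((hasDerivAt_id θ).sub_const p).const_mul α).add_const δ
    have := ((Real.hasDerivAt_log hpos.ne').comp θ hinner).div_const α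
    rw [show (1:ℝ)/(α*(θ-p)+δ) = (α*(θ-p)+δ)⁻¹ * α / α by
      rw [one_div, mul_div_assoc, div_self hα.ne', mul_one]]
    exact this
  have hint : IntervalIntegrable (fun θ => 1/(α*(θ-p)+δ)) volume p (p+r) := by
    apply ContinuousOn.intervalIntegrable
    rw [Set.uIcc_of_le hab]
    apply ContinuousOn.div continuousOn_const
      (((continuous_const.mul (continuous_id.sub continuous_const)).add continuous_const)).continuousOn
    intro θ hθ
    have : 0 < α*(θ-p)+δ := by nlinarith [hθ.1]
    exact this.ne'
  rw [intervalIntegral.integral_eq_sub_of_hasDerivAt key hint]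
  rw [show α*(p+r-p)+δ = α*r+δ by ring, show α*(p-p)+δ = δ by ring]
  ring

lemma lower_log {α δ r p : ℝ} (hα : 0 < α) (hδ : 0 < δ) (hr : 0 ≤ r) {g : ℝ → ℝ}
    (hg : ContinuousOn g (Set.Icc p (p+r)))
    (hgpos : ∀ θ ∈ Set.Icc p (p+r), 0 < g θ)
    (hb : ∀ θ ∈ Set.Icc p (p+r), g θ ≤ α*(θ-p)+δ) :
    (Real.log (α*r+δ) - Real.log δ)/α ≤ ∫ θ in p..(p+r), 1/g θ := by
  have hab : p ≤ p + r := by linarith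
  rw [← log_int hα hδ hr]
  have hint1 : IntervalIntegrable (fun θ => 1/(α*(θ-p)+δ)) volume p (p+r) := by
    apply ContinuousOn.intervalIntegrable
    rw [Set.uIcc_of_le hab]
    apply ContinuousOn.div continuousOn_const
      (((continuous_const.mul (continuous_id.sub continuous_const)).add continuous_const)).continuousOn
    intro θ hθ
    have : 0 < α*(θ-p)+δ := by nlinarith [hθ.1]
    exact this.ne'
  have hint2 : IntervalIntegrable (fun θ => 1/g θ) volume p (p+r) := by
    apply ContinuousOn.intervalIntegrable
    rw [Set.uIcc_of_le hab]
    exact ContinuousOn.div continuousOn_const hg (fun θ hθ => (hgpos θ hθ).ne')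
  apply intervalIntegral.integral_mono_on hab hint1 hint2
  intro x hx
  exact one_div_le_one_div_of_le (hgpos x hx) (hb x hx)

lemma lower_log' {α δ r p : ℝ} (hα : 0 < α) (hδ : 0 < δ) (hr : 0 ≤ r) {g : ℝ → ℝ}
    (hg : ContinuousOn g (Set.Icc (p-r) p))
    (hgpos : ∀ θ ∈ Set.Icc (p-r) p, 0 < g θ)
    (hb : ∀ θ ∈ Set.Icc (p-r) p, g θ ≤ α*(p-θ)+δ) :
    (Real.log (α*r+δ) - Real.log δ)/α ≤ ∫ θ in (p-r)..p, 1/g θ := by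
  have hmaps : ∀ u ∈ Set.Icc p (p+r), 2*p - u ∈ Set.Icc (p-r) p := by
    intro u hu
    exact ⟨by linarith [hu.2], by linarith [hu.1]⟩
  have key := lower_log hα hδ hr (g := fun u => g (2*p - u))
    (hg.comp ((continuous_const.sub continuous_id).continuousOn) hmaps)
    (fun u hu => hgpos _ (hmaps u hu))
    (fun u hu => le_trans (hb _ (hmaps u hu)) (by rw [show p - (2*p-u) = u - p by ring]))
  have h2 : (∫ u in p..(p+r), (fun θ => 1/g θ) (2*p - u))
      = ∫ θ in (2*p - (p+r))..(2*p - p), 1/g θ :=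
    intervalIntegral.integral_comp_sub_left (fun θ => 1/g θ) (2*p)
  rw [show 2*p - (p+r) = p - r by ring, show 2*p - p = p by ring] at h2
  calc (Real.log (α*r+δ) - Real.log δ)/α ≤ ∫ u in p..(p+r), 1/g (2*p - u) := key
    _ = ∫ θ in (p-r)..p, 1/g θ := h2

lemma sub_integral {a b u v : ℝ} (hau : a ≤ u) (huv : u ≤ v) (hvb : v ≤ b) {g : ℝ → ℝ}
    (hg : ContinuousOn g (Set.Icc a b)) (hgpos : ∀ θ ∈ Set.Icc a b, 0 < g θ) :
    ∫ θ in u..v, 1/g θ ≤ ∫ θ in a..b, 1/g θ := by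
  have hcont : ContinuousOn (fun θ => 1/g θ) (Set.Icc a b) :=
    continuousOn_const.div hg (fun θ hθ => (hgpos θ hθ).ne')
  have hib : ∀ {x y : ℝ}, a ≤ x → x ≤ y → y ≤ b →
      IntervalIntegrable (fun θ => 1/g θ) volume x y := by
    intro x y h1 h2 h3
    apply ContinuousOn.intervalIntegrable
    rw [Set.uIcc_of_le h2]
    exact hcont.mono (Set.Icc_subset_Icc h1 h3)
  have e1 : ∫ θ in a..v, 1/g θ = (∫ θ in a..u, 1/g θ) + ∫ θ in u..v, 1/g θ :=
    (intervalIntegral.integral_add_adjacent_intervals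
      (hib le_rfl hau (huv.trans hvb)) (hib hau huv hvb)).symm
  have e2 : ∫ θ in a..b, 1/g θ = (∫ θ in a..v, 1/g θ) + ∫ θ in v..b, 1/g θ :=
    (intervalIntegral.integral_add_adjacent_intervals
      (hib le_rfl (hau.trans huv) hvb) (hib (hau.trans huv) hvb le_rfl)).symm
  have n1 : 0 ≤ ∫ θ in a..u, 1/g θ := by
    apply intervalIntegral.integral_nonneg hau
    intro x hx
    exact (one_div_pos.mpr (hgpos x ⟨hx.1, hx.2.trans (huv.trans hvb)⟩)).le
  have n2 : 0 ≤ ∫ θ in v..b, 1/g θ := by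
    apply intervalIntegral.integral_nonneg hvb
    intro x hx
    exact (one_div_pos.mpr (hgpos x ⟨(hau.trans huv).trans hx.1, hx.2⟩)).le
  linarith

/-- Existence of a positive admissible `c` with `∫ 1/D > 1`. -/
lemma exists_L_gt (ψp ψm : ℝ) (hψp : ψp ∈ Set.Ioo 0 π) (hψm : ψm ∈ Set.Ioo 0 π) :
    ∃ c : ℝ, 0 < c ∧ (∀ θ ∈ Set.Icc (-ψp) ψm, 0 < c * Real.sin θ + (ψp + ψm)) ∧
      1 < ∫ θ in (-ψp)..ψm, 1/(c * Real.sin θ + (ψp + ψm)) := by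
  obtain ⟨hψp1, hψp2⟩ := hψp
  obtain ⟨hψm1, hψm2⟩ := hψm
  set S := ψp + ψm with hSdef
  have hSpos : 0 < S := by positivity
  have ha0 : -ψp ≤ 0 := by linarith
  have hab : -ψp ≤ ψm := by linarith
  -- minimum of sin on [-ψp, 0]
  obtain ⟨θ₀, hθ₀mem, hθ₀min⟩ := (isCompact_Icc (a := -ψp) (b := 0)).exists_isMinOn
    (Set.nonempty_Icc.mpr ha0) Real.continuous_sin.continuousOn
  set m := Real.sin θ₀ with hmdef
  have hmin : ∀ θ ∈ Set.Icc (-ψp) (0:ℝ), m ≤ Real.sin θ := fun θ hθ => hθ₀min hθ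
  have hm : m < 0 := by
    have h1 : m ≤ Real.sin (-ψp) := hmin (-ψp) ⟨le_refl _, ha0⟩
    have h2 : 0 < Real.sin ψp := Real.sin_pos_of_pos_of_lt_pi hψp1 hψp2
    rw [Real.sin_neg] at h1
    linarith
  set cs := S / (-m) with hcsdef
  have hcs : 0 < cs := div_pos hSpos (neg_pos.mpr hm)
  set r := ψp / 2 with hrdef
  have hrpos : 0 < r := by positivity
  set δ := min (S/2) (cs * r / Real.exp cs) with hδdef
  have hδpos : 0 < δ := lt_min (by positivity) (by positivity)
  have hδS : δ < S := lt_of_le_of_lt (min_le_left _ _) (by linarith)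
  set c := (S - δ) / (-m) with hcdef
  have hcpos : 0 < c := div_pos (by linarith) (neg_pos.mpr hm)
  have hccs : c ≤ cs := by
    rw [hcdef, hcsdef]
    exact (div_le_div_iff_of_pos_right (neg_pos.mpr hm)).mpr (by linarith)
  have hm0 : m ≠ 0 := hm.ne
  have hcm : c * m + S = δ := by
    have h : c * m = -(S - δ) := by
      rw [hcdef, div_mul_eq_mul_div, div_neg, mul_div_assoc, div_self hm0, mul_one]
    linarith
  -- admissibility with lower bound δ
  have hsinlow : ∀ θ ∈ Set.Icc (-ψp) ψm, m ≤ Real.sin θ := by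
    intro θ hθ
    rcases le_or_gt θ 0 with h0 | h0
    · exact hmin θ ⟨hθ.1, h0⟩
    · have : 0 ≤ Real.sin θ :=
        Real.sin_nonneg_of_nonneg_of_le_pi h0.le (le_trans hθ.2 hψm2.le)
      linarith
  have hadm : ∀ θ ∈ Set.Icc (-ψp) ψm, δ ≤ c * Real.sin θ + S := by
    intro θ hθ
    have hsm := hsinlow θ hθ
    nlinarith [mul_le_mul_of_nonneg_left hsm hcpos.le]
  have hadm' : ∀ θ ∈ Set.Icc (-ψp) ψm, 0 < c * Real.sin θ + S :=
    fun θ hθ => lt_of_lt_of_le hδpos (hadm θ hθ)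
  -- pointwise Lipschitz comparison
  have hlip : ∀ θ ∈ Set.Icc (-ψp) ψm, c * Real.sin θ + S ≤ cs * |θ - θ₀| + δ := by
    intro θ hθ
    have hsm := hsinlow θ hθ
    have h1 : Real.sin θ - m ≤ |θ - θ₀| := by
      calc Real.sin θ - m ≤ |Real.sin θ - m| := le_abs_self _
        _ ≤ |θ - θ₀| := sin_lip θ θ₀
    have h2 : c * (Real.sin θ - m) ≤ cs * |θ - θ₀| :=
      mul_le_mul hccs h1 (by linarith) hcs.le
    nlinarith
  -- the log bound is > 1
  have hδexp : δ * Real.exp cs ≤ cs * r := by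
    have hδ2 : δ ≤ cs * r / Real.exp cs := min_le_right _ _
    rw [le_div_iff₀ (Real.exp_pos cs)] at hδ2
    exact hδ2
  have hlog : 1 < (Real.log (cs*r+δ) - Real.log δ)/cs := by
    rw [← Real.log_div (by positivity) hδpos.ne', lt_div_iff₀ hcs, one_mul,
      Real.lt_log_iff_exp_lt (by positivity), lt_div_iff₀ hδpos]
    nlinarith [Real.exp_pos cs]
  -- one side interval of length r around θ₀ lies in [-ψp, 0]
  have hθ₀1 : -ψp ≤ θ₀ := hθ₀mem.1
  have hθ₀2 : θ₀ ≤ 0 := hθ₀mem.2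
  have hside : ∃ u v : ℝ, -ψp ≤ u ∧ u ≤ v ∧ v ≤ 0 ∧
      (Real.log (cs*r+δ) - Real.log δ)/cs ≤ ∫ θ in u..v, 1/(c*Real.sin θ + S) := by
    rcases le_or_gt θ₀ (-ψp + r) with hcase | hcase
    · refine ⟨θ₀, θ₀ + r, hθ₀1, by linarith, by linarith, ?_⟩
      have hsub : Set.Icc θ₀ (θ₀+r) ⊆ Set.Icc (-ψp) ψm := by
        intro x hx
        exact ⟨le_trans hθ₀1 hx.1, by nlinarith [hx.2]⟩
      apply lower_log hcs hδpos hrpos.le ((contD c S).continuousOn)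
        (fun θ hθ => hadm' θ (hsub hθ))
      intro θ hθ
      have := hlip θ (hsub hθ)
      rwa [abs_of_nonneg (by linarith [hθ.1] : (0:ℝ) ≤ θ - θ₀)] at this
    · refine ⟨θ₀ - r, θ₀, by linarith, by linarith, hθ₀2, ?_⟩
      have hsub : Set.Icc (θ₀-r) θ₀ ⊆ Set.Icc (-ψp) ψm := by
        intro x hx
        exact ⟨by linarith [hx.1], by linarith [hx.2]⟩
      apply lower_log' hcs hδpos hrpos.le ((contD c S).continuousOn)
        (fun θ hθ => hadm' θ (hsub hθ))
      intro θ hθ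
      have := hlip θ (hsub hθ)
      rwa [abs_of_nonpos (by linarith [hθ.2] : θ - θ₀ ≤ (0:ℝ)),
        neg_sub] at this
  obtain ⟨u, v, hau, huv, hv0, hlow⟩ := hside
  refine ⟨c, hcpos, hadm', ?_⟩
  calc (1:ℝ) < (Real.log (cs*r+δ) - Real.log δ)/cs := hlog
    _ ≤ ∫ θ in u..v, 1/(c*Real.sin θ + S) := hlow
    _ ≤ ∫ θ in (-ψp)..ψm, 1/(c*Real.sin θ + S) :=
        sub_integral hau huv (by linarith) ((contD c S).continuousOn) hadm'

lemma between_low {a b S c₂ ε : ℝ} (hSε : ε ≤ S)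
    (h₂ : ∀ θ ∈ Set.Icc a b, ε ≤ c₂ * Real.sin θ + S) {c : ℝ} (hc : c ∈ Set.Icc 0 c₂) :
    ∀ θ ∈ Set.Icc a b, ε ≤ c * Real.sin θ + S := by
  intro θ hθ
  have h2 := h₂ θ hθ
  rcases le_or_gt 0 (Real.sin θ) with hs | hs
  · nlinarith [hc.1]
  · nlinarith [hc.2]

lemma F_contOn {a b S c₂ ε : ℝ} (hab : a ≤ b) (hε : 0 < ε) (hSε : ε ≤ S)
    (h₂ : ∀ θ ∈ Set.Icc a b, ε ≤ c₂ * Real.sin θ + S) :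
    ContinuousOn (fun c => ∫ θ in a..b, Real.sin θ / (c * Real.sin θ + S))
      (Set.Icc 0 c₂) := by
  apply LipschitzOnWith.continuousOn (K := ((b-a)/ε^2).toNNReal)
  apply LipschitzOnWith.of_dist_le_mul
  intro x hx y hy
  have hxl := between_low hSε h₂ hx
  have hyl := between_low hSε h₂ hy
  have hxp : ∀ θ ∈ Set.Icc a b, 0 < x * Real.sin θ + S :=
    fun θ hθ => lt_of_lt_of_le hε (hxl θ hθ)
  have hyp : ∀ θ ∈ Set.Icc a b, 0 < y * Real.sin θ + S :=
    fun θ hθ => lt_of_lt_of_le hε (hyl θ hθ)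
  have hd := diff_formula hab hxp hyp
  have hbound : ‖∫ θ in a..b,
      (Real.sin θ)^2 / ((x * Real.sin θ + S) * (y * Real.sin θ + S))‖
      ≤ 1/ε^2 * |b - a| := by
    apply intervalIntegral.norm_integral_le_of_norm_le_const
    intro θ hθ
    rw [Set.uIoc_of_le hab] at hθ
    have hθ' : θ ∈ Set.Icc a b := ⟨hθ.1.le, hθ.2⟩
    have h1 := hxl θ hθ'
    have h2 := hyl θ hθ'
    rw [Real.norm_eq_abs, abs_of_nonneg (div_nonneg (sq_nonneg _)
      (by nlinarith))]
    apply div_le_div₀ zero_le_one (by nlinarith [Real.sin_sq_le_one θ]) (by positivity)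
      (by nlinarith)
  rw [Real.dist_eq, Real.dist_eq, hd, abs_mul]
  rw [Real.coe_toNNReal _ (div_nonneg (by linarith) (by positivity) : (0:ℝ) ≤ (b-a)/ε^2)]
  rw [abs_of_nonneg (by linarith : (0:ℝ) ≤ b - a)] at hbound
  calc |y - x| * ‖∫ θ in a..b,
        (Real.sin θ)^2 / ((x * Real.sin θ + S) * (y * Real.sin θ + S))‖
      ≤ |y - x| * (1/ε^2 * (b-a)) := by
        apply mul_le_mul_of_nonneg_left hbound (abs_nonneg _)
    _ = (b-a)/ε^2 * |x - y| := by rw [abs_sub_comm]; ring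

lemma exists_F_neg (ψp ψm : ℝ) (hψp : ψp ∈ Set.Ioo 0 π) (hψm : ψm ∈ Set.Ioo 0 π) :
    ∃ c : ℝ, 0 < c ∧ (∀ θ ∈ Set.Icc (-ψp) ψm, 0 < c * Real.sin θ + (ψp + ψm)) ∧
      (∫ θ in (-ψp)..ψm, Real.sin θ / (c * Real.sin θ + (ψp + ψm))) < 0 := by
  obtain ⟨c, hc, hadm, hL⟩ := exists_L_gt ψp ψm hψp hψm
  have hab : -ψp ≤ ψm := by linarith [hψp.1, hψm.1]
  have hS : 0 < ψp + ψm := by linarith [hψp.1, hψm.1]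
  have hid := identity hab hadm
  refine ⟨c, hc, hadm, ?_⟩
  by_contra hcon
  push_neg at hcon
  nlinarith [mul_pos hS (sub_pos.mpr hL), mul_nonneg hc.le hcon]

lemma F_zero_eval (ψp ψm : ℝ) (hS : (0:ℝ) < ψp + ψm) :
    (∫ θ in (-ψp)..ψm, Real.sin θ / ((0:ℝ) * Real.sin θ + (ψp + ψm)))
      = (Real.cos ψp - Real.cos ψm) / (ψp + ψm) := by
  simp only [zero_mul, zero_add]
  rw [intervalIntegral.integral_div, integral_sin, Real.cos_neg]

lemma exists_root_lt (ψp ψm : ℝ) (hψp : ψp ∈ Set.Ioo 0 π) (hψm : ψm ∈ Set.Ioo 0 π)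
    (hlt : ψp < ψm) :
    ∃ c : ℝ, 0 < c ∧ (∀ θ ∈ Set.Icc (-ψp) ψm, 0 < c * Real.sin θ + (ψp + ψm)) ∧
      (∫ θ in (-ψp)..ψm, Real.sin θ / (c * Real.sin θ + (ψp + ψm))) = 0 := by
  obtain ⟨c₂, hc₂, hadm₂, hFneg⟩ := exists_F_neg ψp ψm hψp hψm
  have hS : 0 < ψp + ψm := by linarith [hψp.1, hψm.1]
  have hab : -ψp ≤ ψm := by linarith [hψp.1, hψm.1]
  obtain ⟨θ₁, hθ₁mem, hθ₁min⟩ := (isCompact_Icc (a := -ψp) (b := ψm)).exists_isMinOn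
    (Set.nonempty_Icc.mpr hab) (contD c₂ (ψp + ψm)).continuousOn
  set ε := min (ψp + ψm) (c₂ * Real.sin θ₁ + (ψp + ψm)) with hεdef
  have hεpos : 0 < ε := lt_min hS (hadm₂ θ₁ hθ₁mem)
  have hεS : ε ≤ ψp + ψm := min_le_left _ _
  have h₂ : ∀ θ ∈ Set.Icc (-ψp) ψm, ε ≤ c₂ * Real.sin θ + (ψp + ψm) :=
    fun θ hθ => le_trans (min_le_right _ _) (hθ₁min hθ)
  have hcont := F_contOn hab hεpos hεS h₂
  have hF0 : 0 < ∫ θ in (-ψp)..ψm, Real.sin θ / ((0:ℝ) * Real.sin θ + (ψp + ψm)) := by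
    rw [F_zero_eval ψp ψm hS]
    apply div_pos _ hS
    have := Real.cos_lt_cos_of_nonneg_of_le_pi hψp.1.le hψm.2.le hlt
    linarith
  have himg := intermediate_value_Icc' hc₂.le hcont
  have h0mem : (0:ℝ) ∈ Set.Icc
      (∫ θ in (-ψp)..ψm, Real.sin θ / (c₂ * Real.sin θ + (ψp + ψm)))
      (∫ θ in (-ψp)..ψm, Real.sin θ / ((0:ℝ) * Real.sin θ + (ψp + ψm))) :=
    ⟨hFneg.le, hF0.le⟩
  obtain ⟨c₀, hc₀mem, hFc₀⟩ := himg h0mem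
  have hadm₀ : ∀ θ ∈ Set.Icc (-ψp) ψm, 0 < c₀ * Real.sin θ + (ψp + ψm) :=
    fun θ hθ => lt_of_lt_of_le hεpos (between_low hεS h₂ hc₀mem θ hθ)
  have hc₀pos : 0 < c₀ := by
    rcases hc₀mem.1.lt_or_eq with h | h
    · exact h
    · exfalso
      rw [← h] at hFc₀
      simp only at hFc₀
      linarith [hF0, hFc₀.ge, hFc₀.le]
  exact ⟨c₀, hc₀pos, hadm₀, hFc₀⟩

lemma reflect (ψp ψm S c : ℝ) :
    (∫ θ in (-ψp)..ψm, Real.sin θ / (-c * Real.sin θ + S))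
      = - ∫ θ in (-ψm)..ψp, Real.sin θ / (c * Real.sin θ + S) := by
  have h1 : ∀ θ : ℝ, Real.sin θ / (-c * Real.sin θ + S)
      = -((fun x => Real.sin x / (c * Real.sin x + S)) (-θ)) := by
    intro θ
    simp only [Real.sin_neg]
    ring
  calc (∫ θ in (-ψp)..ψm, Real.sin θ / (-c * Real.sin θ + S))
      = ∫ θ in (-ψp)..ψm, -((fun x => Real.sin x / (c * Real.sin x + S)) (-θ)) := by
        simp only [h1]
    _ = -(∫ θ in (-ψp)..ψm, (fun x => Real.sin x / (c * Real.sin x + S)) (-θ)) :=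
        intervalIntegral.integral_neg
    _ = - ∫ θ in (-ψm)..ψp, Real.sin θ / (c * Real.sin θ + S) := by
        rw [intervalIntegral.integral_comp_neg (fun x => Real.sin x / (c * Real.sin x + S))]
        simp

lemma length_one {ψp ψm c : ℝ} (hS : 0 < ψp + ψm) (hab : -ψp ≤ ψm)
    (hadm : ∀ θ ∈ Set.Icc (-ψp) ψm, 0 < c * Real.sin θ + (ψp + ψm))
    (hF : (∫ θ in (-ψp)..ψm, Real.sin θ / (c * Real.sin θ + (ψp + ψm))) = 0) :
    (∫ θ in (-ψp)..ψm, 1 / (c * Real.sin θ + (ψp + ψm))) = 1 := by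
  have hid := identity hab hadm
  rw [hF, mul_zero, zero_add] at hid
  have h2 : (ψp + ψm) * (∫ θ in (-ψp)..ψm, 1 / (c * Real.sin θ + (ψp + ψm)))
      = (ψp + ψm) * 1 := by linarith
  exact mul_left_cancel₀ hS.ne' h2

end TW

/-- **Existence and uniqueness of the traveling wave speed.**
For contact angles `ψ₊, ψ₋ ∈ (0,π)` there is a unique `c ∈ ℝ` with
`c sin θ + S > 0` on `[−ψ₊,ψ₋]` and `∫ sin θ/(c sin θ + S) dθ = 0` (`S = ψ₊+ψ₋`);
moreover the sign of `c` matches the sign of `ψ₋ − ψ₊`, and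
`∫ dθ/(c sin θ + S) = 1`, i.e. the corresponding profile curve has length `1`. -/
theorem traveling_wave_speed
    (ψp ψm : ℝ) (hψp : ψp ∈ Set.Ioo 0 π) (hψm : ψm ∈ Set.Ioo 0 π) :
    ∃ c : ℝ,
      ((∀ θ ∈ Set.Icc (-ψp) ψm, 0 < c * Real.sin θ + (ψp + ψm))
        ∧ (∫ θ in (-ψp)..ψm, Real.sin θ / (c * Real.sin θ + (ψp + ψm))) = 0)
      ∧ ((0 < c ↔ ψp < ψm) ∧ (c = 0 ↔ ψm = ψp) ∧ (c < 0 ↔ ψm < ψp))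
      ∧ (∫ θ in (-ψp)..ψm, 1 / (c * Real.sin θ + (ψp + ψm))) = 1
      ∧ (∀ c' : ℝ,
          (∀ θ ∈ Set.Icc (-ψp) ψm, 0 < c' * Real.sin θ + (ψp + ψm)) →
          (∫ θ in (-ψp)..ψm, Real.sin θ / (c' * Real.sin θ + (ψp + ψm))) = 0 →
          c' = c) := by
  obtain ⟨hψp1, hψp2⟩ := hψp
  obtain ⟨hψm1, hψm2⟩ := hψm
  have hS : 0 < ψp + ψm := by linarith
  have hab : -ψp ≤ ψm := by linarith
  have ha0 : -ψp ≤ 0 := by linarith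
  rcases lt_trichotomy ψp ψm with hlt | heq | hgt
  · obtain ⟨c, hcpos, hadm, hF⟩ :=
      TW.exists_root_lt ψp ψm ⟨hψp1, hψp2⟩ ⟨hψm1, hψm2⟩ hlt
    exact ⟨c, ⟨hadm, hF⟩,
      ⟨iff_of_true hcpos hlt,
        iff_of_false hcpos.ne' (by intro h; linarith),
        iff_of_false (not_lt.mpr hcpos.le) (not_lt.mpr hlt.le)⟩,
      TW.length_one hS hab hadm hF,
      fun c' h1 h2 => TW.uniq ha0 hψm1 hψm2 hadm h1 hF h2⟩
  · have hadm : ∀ θ ∈ Set.Icc (-ψp) ψm, 0 < (0:ℝ) * Real.sin θ + (ψp + ψm) :=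
      fun θ _ => by simpa using hS
    have hF : (∫ θ in (-ψp)..ψm, Real.sin θ / ((0:ℝ) * Real.sin θ + (ψp + ψm))) = 0 := by
      rw [TW.F_zero_eval ψp ψm hS, heq]
      simp
    exact ⟨0, ⟨hadm, hF⟩,
      ⟨iff_of_false (lt_irrefl 0) (by rw [heq]; exact lt_irrefl _),
        iff_of_true rfl heq.symm,
        iff_of_false (lt_irrefl 0) (by rw [heq]; exact lt_irrefl _)⟩,
      TW.length_one hS hab hadm hF,
      fun c' h1 h2 => TW.uniq ha0 hψm1 hψm2 hadm h1 hF h2⟩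
  · obtain ⟨c, hcpos, hadm, hF⟩ :=
      TW.exists_root_lt ψm ψp ⟨hψm1, hψm2⟩ ⟨hψp1, hψp2⟩ hgt
    have hadm₀ : ∀ θ ∈ Set.Icc (-ψp) ψm, 0 < (-c) * Real.sin θ + (ψp + ψm) := by
      intro θ hθ
      have h := hadm (-θ) ⟨by linarith [hθ.2], by linarith [hθ.1]⟩
      rw [Real.sin_neg] at h
      have he : c * (-Real.sin θ) = (-c) * Real.sin θ := by ring
      linarith [h, he.ge, he.le]
    have hF₀ : (∫ θ in (-ψp)..ψm, Real.sin θ / ((-c) * Real.sin θ + (ψp + ψm))) = 0 := by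
      simp only [show ψp + ψm = ψm + ψp from add_comm _ _]
      rw [TW.reflect ψp ψm (ψm + ψp) c, hF, neg_zero]
    exact ⟨-c, ⟨hadm₀, hF₀⟩,
      ⟨iff_of_false (by linarith) (not_lt.mpr hgt.le),
        iff_of_false (by intro h; linarith) (by intro h; linarith),
        iff_of_true (by linarith) hgt⟩,
      TW.length_one hS hab hadm₀ hF₀,
      fun c' h1 h2 => TW.uniq ha0 hψm1 hψm2 hadm₀ h1 hF₀ h2⟩
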